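/- Let f be a continuously differentiable density on [0,1] with f > 0 and CDF F. Define M(x) = ∫₀^{x/2}(1-F(t))dt + ∫_{x/2}^x (1-F(t))F(x-t)dt. Then M is twice differentiable with M''(x) = -∫_{x/2}^x f(t)f(x-t)dt < 0 for x ∈ (0,1); in particular M is strictly concave. -/

import Mathlib

open intervalIntegral

section S15Aux
open MeasureTheory

/-- truncation of a function to values on `[0,1]` -/
noncomputable def s15tl (f : ℝ → ℝ) (y : ℝ) : ℝ := f (max 0 (min 1 y))

lemma s15pr_mem (y : ℝ) : max 0 (min 1 y) ∈ Set.Icc (0:ℝ) 1 :=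
  ⟨le_max_left _ _, max_le zero_le_one (min_le_left _ _)⟩

lemma s15tl_eq (f : ℝ → ℝ) {t : ℝ} (h0 : 0 ≤ t) (h1 : t ≤ 1) : s15tl f t = f t := by
  unfold s15tl; rw [min_eq_right h1, max_eq_right h0]

lemma s15tl_cont {f : ℝ → ℝ} (hf : ContinuousOn f (Set.Icc 0 1)) : Continuous (s15tl f) :=
  hf.comp_continuous (continuous_const.max (continuous_const.min continuous_id)) s15pr_mem

lemma s15tl_bound {f : ℝ → ℝ} (hf : ContinuousOn f (Set.Icc 0 1)) :
    ∃ C : ℝ, 0 ≤ C ∧ ∀ y, |s15tl f y| ≤ C := by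
  obtain ⟨C, hC⟩ := isCompact_Icc.exists_bound_of_continuousOn hf
  refine ⟨C, le_trans (norm_nonneg (f 0)) (hC 0 ⟨le_refl _, zero_le_one⟩), fun y => ?_⟩
  have h := hC _ (s15pr_mem y)
  rw [Real.norm_eq_abs] at h
  exact h

lemma s15tl_hasDerivAt {f : ℝ → ℝ} {y d : ℝ} (hy : y ∈ Set.Ioo (0:ℝ) 1)
    (h : HasDerivAt f d y) : HasDerivAt (s15tl f) d y := by
  refine h.congr_of_eventuallyEq ?_
  filter_upwards [isOpen_Ioo.mem_nhds hy] with t ht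
  exact s15tl_eq f ht.1.le ht.2.le

lemma s15F_hasDerivAt {f F : ℝ → ℝ} (hfc : ContinuousOn f (Set.Icc 0 1))
    (hF : ∀ x, F x = ∫ t in (0:ℝ)..x, f t) {y : ℝ} (hy : y ∈ Set.Ioo (0:ℝ) 1) :
    HasDerivAt (s15tl F) (s15tl f y) y := by
  have hint : IntervalIntegrable f MeasureTheory.volume 0 y := by
    apply ContinuousOn.intervalIntegrable
    apply hfc.mono
    rw [Set.uIcc_of_le hy.1.le]
    exact Set.Icc_subset_Icc le_rfl hy.2.le
  have hmeas : StronglyMeasurableAtFilter f (nhds y) MeasureTheory.volume :=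
    ContinuousOn.stronglyMeasurableAtFilter isOpen_Ioo (hfc.mono Set.Ioo_subset_Icc_self) y hy
  have hcont : ContinuousAt f y := hfc.continuousAt (Icc_mem_nhds hy.1 hy.2)
  have hprim : HasDerivAt (fun u => ∫ t in (0:ℝ)..u, f t) (f y) y :=
    intervalIntegral.integral_hasDerivAt_right hint hmeas hcont
  have hFd : HasDerivAt F (f y) y := by
    have hFe : F = fun u => ∫ t in (0:ℝ)..u, f t := funext hF
    rw [hFe]; exact hprim
  rw [s15tl_eq f hy.1.le hy.2.le]
  exact s15tl_hasDerivAt hy hFd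

lemma s15f_hasDerivAt {f : ℝ → ℝ} (hf : ContDiffOn ℝ 1 f (Set.Icc 0 1)) {y : ℝ}
    (hy : y ∈ Set.Ioo (0:ℝ) 1) :
    HasDerivAt (s15tl f) (s15tl (derivWithin f (Set.Icc 0 1)) y) y := by
  have hmem : Set.Icc (0:ℝ) 1 ∈ nhds y := Icc_mem_nhds hy.1 hy.2
  have hd : DifferentiableAt ℝ f y :=
    ((hf.differentiableOn one_ne_zero) y (Set.Ioo_subset_Icc_self hy)).differentiableAt hmem
  have he : s15tl (derivWithin f (Set.Icc 0 1)) y = deriv f y := by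
    rw [s15tl_eq _ hy.1.le hy.2.le, derivWithin_of_mem_nhds hmem]
  rw [he]
  exact s15tl_hasDerivAt hy hd.hasDerivAt

lemma s15abs_mul_le {u v U V : ℝ} (hu : |u| ≤ U) (hv : |v| ≤ V) : |u*v| ≤ U*V := by
  rw [abs_mul]
  exact mul_le_mul hu hv (abs_nonneg _) (le_trans (abs_nonneg _) hu)

/-- generic differentiation under the interval integral over `[1/2, 1]` -/
lemma s15_hasDerivAt_int {G G' : ℝ → ℝ → ℝ} {x C : ℝ} (hx : x ∈ Set.Ioo (0:ℝ) 1)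
    (hGm : ∀ y, Continuous (G y))
    (hG'm : Continuous (G' x))
    (hbound : ∀ s ∈ Set.Ioc (1/2:ℝ) 1, ∀ y ∈ Set.Ioo (0:ℝ) 1, |G' y s| ≤ C)
    (hdiff : ∀ s ∈ Set.Ioo (1/2:ℝ) 1, ∀ y ∈ Set.Ioo (0:ℝ) 1,
      HasDerivAt (fun z => G z s) (G' y s) y) :
    HasDerivAt (fun y => ∫ s in (1/2:ℝ)..1, G y s) (∫ s in (1/2:ℝ)..1, G' x s) x := by
  have hε : 0 < min x (1 - x) := lt_min hx.1 (by linarith [hx.2])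
  have hball : Metric.ball x (min x (1-x)) ⊆ Set.Ioo 0 1 := by
    intro y hy
    rw [Metric.mem_ball, Real.dist_eq] at hy
    obtain ⟨h1, h2⟩ := abs_lt.1 hy
    have h3 := min_le_left x (1-x); have h4 := min_le_right x (1-x)
    constructor <;> linarith
  have hne : ∀ᵐ (s : ℝ) ∂MeasureTheory.volume, s ≠ (1:ℝ) := by
    rw [MeasureTheory.ae_iff]
    have he : {a : ℝ | ¬a ≠ 1} = {1} := by ext a; simp
    rw [he]; exact Real.volume_singleton
  have hIoc : Set.uIoc (1/2:ℝ) 1 = Set.Ioc (1/2:ℝ) 1 := Set.uIoc_of_le (by norm_num)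
  refine (intervalIntegral.hasDerivAt_integral_of_dominated_loc_of_deriv_le
    (bound := fun _ => C) (F' := G') (Metric.ball_mem_nhds x hε) ?_ ?_ ?_ ?_ ?_ ?_).2
  · exact Filter.Eventually.of_forall fun y => (hGm y).aestronglyMeasurable
  · exact (hGm x).intervalIntegrable _ _
  · exact hG'm.aestronglyMeasurable
  · refine Filter.Eventually.of_forall fun s hs y hy => ?_
    rw [Real.norm_eq_abs]
    exact hbound s (hIoc ▸ hs) y (hball hy)
  · exact _root_.intervalIntegrable_const
  · filter_upwards [hne] with s hs1 hs y hy
    rw [hIoc] at hs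
    exact hdiff s ⟨hs.1, lt_of_le_of_ne hs.2 hs1⟩ y (hball hy)

noncomputable def s15N (F : ℝ → ℝ) (x : ℝ) : ℝ :=
  ∫ s in (1/2:ℝ)..1, (1 - s15tl F (x*s)) * s15tl F (x - x*s)

noncomputable def s15P (f F : ℝ → ℝ) (x s : ℝ) : ℝ :=
  (1-s) * ((1 - s15tl F (x*s)) * s15tl f (x - x*s)) - s * (s15tl f (x*s) * s15tl F (x - x*s))

noncomputable def s15N1 (f F : ℝ → ℝ) (x : ℝ) : ℝ := ∫ s in (1/2:ℝ)..1, s15P f F x s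

noncomputable def s15Q (f F g : ℝ → ℝ) (x s : ℝ) : ℝ :=
  (1-s)*(1-s) * ((1 - s15tl F (x*s)) * s15tl g (x - x*s))
  - 2*(s*(1-s)) * (s15tl f (x*s) * s15tl f (x - x*s))
  - s*s * (s15tl g (x*s) * s15tl F (x - x*s))

noncomputable def s15N2 (f F g : ℝ → ℝ) (x : ℝ) : ℝ := ∫ s in (1/2:ℝ)..1, s15Q f F g x s

lemma s15h_cont {F : ℝ → ℝ} (hFfc : Continuous (s15tl F)) (y : ℝ) :
    Continuous fun s => (1 - s15tl F (y*s)) * s15tl F (y - y*s) :=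
  (continuous_const.sub (hFfc.comp (continuous_const.mul continuous_id))).mul
    (hFfc.comp (continuous_const.sub (continuous_const.mul continuous_id)))

lemma s15P_cont {f F : ℝ → ℝ} (hffc : Continuous (s15tl f)) (hFfc : Continuous (s15tl F))
    (y : ℝ) : Continuous fun s => s15P f F y s := by
  unfold s15P
  exact ((continuous_const.sub continuous_id).mul
    ((continuous_const.sub (hFfc.comp (continuous_const.mul continuous_id))).mul
      (hffc.comp (continuous_const.sub (continuous_const.mul continuous_id))))).sub
    (continuous_id.mul ((hffc.comp (continuous_const.mul continuous_id)).mul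
      (hFfc.comp (continuous_const.sub (continuous_const.mul continuous_id)))))

lemma s15Q_cont {f F g : ℝ → ℝ} (hffc : Continuous (s15tl f)) (hFfc : Continuous (s15tl F))
    (hgfc : Continuous (s15tl g)) (y : ℝ) : Continuous fun s => s15Q f F g y s := by
  unfold s15Q
  refine Continuous.sub (Continuous.sub ?_ ?_) ?_
  · exact ((continuous_const.sub continuous_id).mul (continuous_const.sub continuous_id)).mul
      ((continuous_const.sub (hFfc.comp (continuous_const.mul continuous_id))).mul
        (hgfc.comp (continuous_const.sub (continuous_const.mul continuous_id))))
  · exact (continuous_const.mul (continuous_id.mul (continuous_const.sub continuous_id))).mul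
      ((hffc.comp (continuous_const.mul continuous_id)).mul
        (hffc.comp (continuous_const.sub (continuous_const.mul continuous_id))))
  · exact (continuous_id.mul continuous_id).mul
      ((hgfc.comp (continuous_const.mul continuous_id)).mul
        (hFfc.comp (continuous_const.sub (continuous_const.mul continuous_id))))

lemma s15N_deriv {f F : ℝ → ℝ} (hfc : ContinuousOn f (Set.Icc 0 1))
    (hFc : ContinuousOn F (Set.Icc 0 1))
    (hF : ∀ x, F x = ∫ t in (0:ℝ)..x, f t)
    {Cf CF : ℝ} (hCf : ∀ y, |s15tl f y| ≤ Cf) (hCF : ∀ y, |s15tl F y| ≤ CF)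
    {x : ℝ} (hx : x ∈ Set.Ioo (0:ℝ) 1) :
    HasDerivAt (s15N F) (s15N1 f F x) x := by
  have hFfc := s15tl_cont hFc
  have hffc := s15tl_cont hfc
  unfold s15N s15N1
  refine s15_hasDerivAt_int (C := 1*((1+CF)*Cf) + 1*(Cf*CF)) hx
    (fun y => s15h_cont hFfc y) (s15P_cont hffc hFfc x) ?_ ?_
  · intro s hs y _
    have hs1 : |s| ≤ 1 := abs_le.2 ⟨by linarith [hs.1], hs.2⟩
    have hs2 : |1 - s| ≤ 1 := abs_le.2 ⟨by linarith [hs.2], by linarith [hs.1]⟩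
    have h1F : ∀ z : ℝ, |1 - s15tl F z| ≤ 1 + CF := fun z =>
      (abs_sub 1 (s15tl F z)).trans (by rw [abs_one]; linarith [hCF z])
    unfold s15P
    refine (abs_sub _ _).trans (add_le_add ?_ ?_)
    · exact s15abs_mul_le hs2 (s15abs_mul_le (h1F _) (hCf _))
    · exact s15abs_mul_le hs1 (s15abs_mul_le (hCf _) (hCF _))
  · intro s hs y hy
    have hys : y*s ∈ Set.Ioo (0:ℝ) 1 := by
      constructor
      · exact mul_pos hy.1 (by linarith [hs.1])
      · nlinarith [hy.1, hy.2, hs.2]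
    have hys2 : y - y*s ∈ Set.Ioo (0:ℝ) 1 := by
      constructor
      · nlinarith [hy.1, hs.2]
      · nlinarith [hy.1, hy.2, hs.1]
    have hi1 : HasDerivAt (fun z : ℝ => z * s) s y := hasDerivAt_mul_const s
    have hi2 : HasDerivAt (fun z : ℝ => z - z*s) (1-s) y :=
      (hasDerivAt_id y).sub (hasDerivAt_mul_const s)
    have hFa' := HasDerivAt.comp y (s15F_hasDerivAt hfc hF hys) hi1
    have hFa : HasDerivAt (fun z => s15tl F (z*s)) (s15tl f (y*s) * s) y := hFa'
    have hFb' := HasDerivAt.comp y (s15F_hasDerivAt hfc hF hys2) hi2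
    have hFb : HasDerivAt (fun z => s15tl F (z - z*s)) (s15tl f (y - y*s) * (1-s)) y := hFb'
    have hraw := ((hasDerivAt_const y (1:ℝ)).sub hFa).mul hFb
    simp only [s15P]
    refine hraw.congr_deriv ?_
    simp only [Pi.sub_apply]
    ring

lemma s15N1_deriv {f F : ℝ → ℝ} (hf : ContDiffOn ℝ 1 f (Set.Icc 0 1))
    (hFc : ContinuousOn F (Set.Icc 0 1))
    (hgc : ContinuousOn (derivWithin f (Set.Icc 0 1)) (Set.Icc 0 1))
    (hF : ∀ x, F x = ∫ t in (0:ℝ)..x, f t)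
    {Cf CF Cg : ℝ} (hCf : ∀ y, |s15tl f y| ≤ Cf) (hCF : ∀ y, |s15tl F y| ≤ CF)
    (hCg : ∀ y, |s15tl (derivWithin f (Set.Icc 0 1)) y| ≤ Cg)
    {x : ℝ} (hx : x ∈ Set.Ioo (0:ℝ) 1) :
    HasDerivAt (s15N1 f F) (s15N2 f F (derivWithin f (Set.Icc 0 1)) x) x := by
  have hfc : ContinuousOn f (Set.Icc 0 1) := hf.continuousOn
  have hFfc := s15tl_cont hFc
  have hffc := s15tl_cont hfc
  have hgfc := s15tl_cont hgc
  unfold s15N1 s15N2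
  refine s15_hasDerivAt_int
    (C := 1*((1+CF)*Cg) + 2*(Cf*Cf) + 1*(Cg*CF)) hx
    (fun y => s15P_cont hffc hFfc y) (s15Q_cont hffc hFfc hgfc x) ?_ ?_
  · intro s hs y _
    have hs1 : |s| ≤ 1 := abs_le.2 ⟨by linarith [hs.1], hs.2⟩
    have hs2 : |1 - s| ≤ 1 := abs_le.2 ⟨by linarith [hs.2], by linarith [hs.1]⟩
    have h1F : ∀ z : ℝ, |1 - s15tl F z| ≤ 1 + CF := fun z =>
      (abs_sub 1 (s15tl F z)).trans (by rw [abs_one]; linarith [hCF z])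
    have habs3 : ∀ a b c : ℝ, |a - b - c| ≤ |a| + |b| + |c| := by
      intro a b c
      have h1 := abs_sub (a - b) c
      have h2 := abs_sub a b
      linarith
    unfold s15Q
    refine (habs3 _ _ _).trans ?_
    have hY1 : |2*(s*(1-s))| ≤ 2 := by
      have hv : |s*(1-s)| ≤ 1 := le_trans (s15abs_mul_le hs1 hs2) (by norm_num)
      have h := s15abs_mul_le (u := (2:ℝ)) (le_of_eq abs_two) hv
      linarith
    refine add_le_add (add_le_add ?_ ?_) ?_
    · exact s15abs_mul_le (le_trans (s15abs_mul_le hs2 hs2) (by norm_num))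
        (s15abs_mul_le (h1F _) (hCg _))
    · exact s15abs_mul_le hY1 (s15abs_mul_le (hCf _) (hCf _))
    · exact s15abs_mul_le (le_trans (s15abs_mul_le hs1 hs1) (by norm_num))
        (s15abs_mul_le (hCg _) (hCF _))
  · intro s hs y hy
    have hys : y*s ∈ Set.Ioo (0:ℝ) 1 := by
      constructor
      · exact mul_pos hy.1 (by linarith [hs.1])
      · nlinarith [hy.1, hy.2, hs.2]
    have hys2 : y - y*s ∈ Set.Ioo (0:ℝ) 1 := by
      constructor
      · nlinarith [hy.1, hs.2]
      · nlinarith [hy.1, hy.2, hs.1]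
    have hi1 : HasDerivAt (fun z : ℝ => z * s) s y := hasDerivAt_mul_const s
    have hi2 : HasDerivAt (fun z : ℝ => z - z*s) (1-s) y :=
      (hasDerivAt_id y).sub (hasDerivAt_mul_const s)
    have hFa' := HasDerivAt.comp y (s15F_hasDerivAt hfc hF hys) hi1
    have hFa : HasDerivAt (fun z => s15tl F (z*s)) (s15tl f (y*s) * s) y := hFa'
    have hFb' := HasDerivAt.comp y (s15F_hasDerivAt hfc hF hys2) hi2
    have hFb : HasDerivAt (fun z => s15tl F (z - z*s)) (s15tl f (y - y*s) * (1-s)) y := hFb'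
    have hfa' := HasDerivAt.comp y (s15f_hasDerivAt hf hys) hi1
    have hfa : HasDerivAt (fun z => s15tl f (z*s))
        (s15tl (derivWithin f (Set.Icc 0 1)) (y*s) * s) y := hfa'
    have hfb' := HasDerivAt.comp y (s15f_hasDerivAt hf hys2) hi2
    have hfb : HasDerivAt (fun z => s15tl f (z - z*s))
        (s15tl (derivWithin f (Set.Icc 0 1)) (y - y*s) * (1-s)) y := hfb'
    have hraw := (HasDerivAt.const_mul (1-s)
        ((((hasDerivAt_const y (1:ℝ)).sub hFa).mul hfb))).sub
      (HasDerivAt.const_mul s (hfa.mul hFb))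
    simp only [s15P, s15Q]
    refine hraw.congr_deriv ?_
    simp only [Pi.sub_apply]
    ring

end S15Aux

/-- In the asymmetric game with continuously differentiable, positive
density f on [0,1] and CDF F, the function
M(x) = ∫₀^{x/2}(1-F) + ∫_{x/2}^x (1-F(t))F(x-t)dt is twice differentiable with
M''(x) = -∫_{x/2}^x f(t)f(x-t)dt < 0 on (0,1), hence strictly concave. -/
theorem stmt15 (f F : ℝ → ℝ)
    (hf : ContDiffOn ℝ 1 f (Set.Icc 0 1))
    (hfpos : ∀ x ∈ Set.Icc (0:ℝ) 1, 0 < f x)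
    (hF : ∀ x, F x = ∫ t in (0:ℝ)..x, f t)
    (M : ℝ → ℝ)
    (hM : ∀ x, M x = (∫ t in (0:ℝ)..(x/2), (1 - F t))
                      + ∫ t in (x/2)..x, (1 - F t) * F (x - t)) :
    (∀ x ∈ Set.Ioo (0:ℝ) 1,
      HasDerivAt (deriv M) (-(∫ t in (x/2)..x, f t * f (x - t))) x ∧
      -(∫ t in (x/2)..x, f t * f (x - t)) < 0) ∧
    StrictConcaveOn ℝ (Set.Icc 0 1) M := by
  have hfc : ContinuousOn f (Set.Icc 0 1) := hf.continuousOn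
  have hgc : ContinuousOn (derivWithin f (Set.Icc 0 1)) (Set.Icc 0 1) :=
    hf.continuousOn_derivWithin (uniqueDiffOn_Icc one_pos) le_rfl
  have hFc : ContinuousOn F (Set.Icc 0 1) := by
    have h1 : MeasureTheory.IntegrableOn f (Set.uIcc (0:ℝ) 1) MeasureTheory.volume := by
      rw [Set.uIcc_of_le zero_le_one]; exact hfc.integrableOn_Icc
    have h2 := intervalIntegral.continuousOn_primitive_interval h1
    rw [Set.uIcc_of_le zero_le_one] at h2
    have hFe : F = fun x => ∫ t in (0:ℝ)..x, f t := funext hF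
    rw [hFe]; exact h2
  obtain ⟨Cf, hCf0, hCf⟩ := s15tl_bound hfc
  obtain ⟨CF, hCF0, hCF⟩ := s15tl_bound hFc
  obtain ⟨Cg, hCg0, hCg⟩ := s15tl_bound hgc
  have hFfc := s15tl_cont hFc
  have hffc := s15tl_cont hfc
  have hgfc := s15tl_cont hgc
  have hFf0 : s15tl F 0 = 0 := by
    rw [s15tl_eq F le_rfl zero_le_one, hF 0, intervalIntegral.integral_same]
  -- rewrite M via truncated functions and the substitution t = x*s
  have hMeq : ∀ x ∈ Set.Icc (0:ℝ) 1,
      M x = (∫ t in (0:ℝ)..(x/2), (1 - s15tl F t)) + x * s15N F x := by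
    intro x hx
    rw [hM x]
    have e1 : (∫ t in (0:ℝ)..(x/2), (1 - F t)) = ∫ t in (0:ℝ)..(x/2), (1 - s15tl F t) := by
      apply intervalIntegral.integral_congr
      intro t ht
      rw [Set.uIcc_of_le (by linarith [hx.1] : (0:ℝ) ≤ x/2)] at ht
      simp only
      rw [s15tl_eq F ht.1 (by linarith [ht.2, hx.2])]
    have e2 : (∫ t in (x/2)..x, (1 - F t) * F (x - t))
        = ∫ t in (x/2)..x, (1 - s15tl F t) * s15tl F (x - t) := by
      apply intervalIntegral.integral_congr
      intro t ht
      rw [Set.uIcc_of_le (by linarith [hx.1] : x/2 ≤ x)] at ht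
      simp only
      rw [s15tl_eq F (by linarith [ht.1, hx.1]) (by linarith [ht.2, hx.2]),
          s15tl_eq F (by linarith [ht.2]) (by linarith [ht.1, hx.2])]
    rw [e1, e2]
    congr 1
    have hsub := intervalIntegral.mul_integral_comp_mul_left
      (a := (1/2:ℝ)) (b := 1) (c := x) (f := fun t => (1 - s15tl F t) * s15tl F (x - t))
    rw [show x * (1/2:ℝ) = x/2 by ring, mul_one] at hsub
    rw [← hsub]
    simp only [s15N]
  have hA : ∀ x : ℝ, HasDerivAt (fun u => ∫ t in (0:ℝ)..(u/2), (1 - s15tl F t))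
      ((1 - s15tl F (x/2)) * (1/2)) x := by
    intro x
    have hP : ∀ y : ℝ, HasDerivAt (fun u => ∫ t in (0:ℝ)..u, (1 - s15tl F t))
        (1 - s15tl F y) y := fun y =>
      intervalIntegral.integral_hasDerivAt_right
        ((continuous_const.sub hFfc).intervalIntegrable _ _)
        ((continuous_const.sub hFfc).stronglyMeasurableAtFilter _ _)
        (continuous_const.sub hFfc).continuousAt
    have h1 := HasDerivAt.comp x (hP (x/2)) ((hasDerivAt_id x).div_const 2)
    exact h1
  have hNcont : Continuous (s15N F) := by
    rw [continuous_iff_continuousAt]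
    intro x
    have hre : s15N F = fun y => ∫ s in Set.Ioc (1/2:ℝ) 1,
        ((1 - s15tl F (y*s)) * s15tl F (y - y*s)) ∂MeasureTheory.volume := by
      funext y
      simp only [s15N]
      exact intervalIntegral.integral_of_le (by norm_num)
    rw [hre]
    refine MeasureTheory.continuousAt_of_dominated (bound := fun _ => (1+CF)*CF) ?_ ?_ ?_ ?_
    · exact Filter.Eventually.of_forall fun y => (s15h_cont hFfc y).aestronglyMeasurable
    · refine Filter.Eventually.of_forall fun y => MeasureTheory.ae_of_all _ fun s => ?_
      rw [Real.norm_eq_abs]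
      have h1F : |1 - s15tl F (y*s)| ≤ 1 + CF :=
        (abs_sub 1 _).trans (by rw [abs_one]; linarith [hCF (y*s)])
      exact s15abs_mul_le h1F (hCF _)
    · exact MeasureTheory.integrableOn_const measure_Ioc_lt_top.ne
    · refine MeasureTheory.ae_of_all _ fun s => Continuous.continuousAt ?_
      exact (continuous_const.sub (hFfc.comp (continuous_id.mul continuous_const))).mul
        (hFfc.comp (continuous_id.sub (continuous_id.mul continuous_const)))
  have hAc : Continuous (fun u : ℝ => ∫ t in (0:ℝ)..(u/2), (1 - s15tl F t)) :=
    continuous_iff_continuousAt.2 fun x => (hA x).continuousAt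
  have hMcontIcc : ContinuousOn M (Set.Icc 0 1) := by
    refine ContinuousOn.congr ((hAc.add (continuous_id.mul hNcont)).continuousOn) ?_
    intro x hx
    exact hMeq x hx
  have hNd : ∀ {x : ℝ}, x ∈ Set.Ioo (0:ℝ) 1 → HasDerivAt (s15N F) (s15N1 f F x) x :=
    fun hx => s15N_deriv hfc hFc hF hCf hCF hx
  have hN1d : ∀ {x : ℝ}, x ∈ Set.Ioo (0:ℝ) 1 →
      HasDerivAt (s15N1 f F) (s15N2 f F (derivWithin f (Set.Icc 0 1)) x) x :=
    fun hx => s15N1_deriv hf hFc hgc hF hCf hCF hCg hx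
  have hMd : ∀ y ∈ Set.Ioo (0:ℝ) 1, HasDerivAt M
      ((1 - s15tl F (y/2)) * (1/2) + (1 * s15N F y + y * s15N1 f F y)) y := by
    intro y hy
    have h1 : HasDerivAt (fun u => (∫ t in (0:ℝ)..(u/2), (1 - s15tl F t)) + u * s15N F u)
        ((1 - s15tl F (y/2)) * (1/2) + (1 * s15N F y + y * s15N1 f F y)) y :=
      (hA y).add ((hasDerivAt_id y).mul (hNd hy))
    refine h1.congr_of_eventuallyEq ?_
    filter_upwards [isOpen_Ioo.mem_nhds hy] with z hz
    exact hMeq z ⟨hz.1.le, hz.2.le⟩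
  have hderivMeq : ∀ y ∈ Set.Ioo (0:ℝ) 1, deriv M y
      = (1 - s15tl F (y/2)) * (1/2) + (1 * s15N F y + y * s15N1 f F y) :=
    fun y hy => (hMd y hy).deriv
  have hneg : ∀ x ∈ Set.Ioo (0:ℝ) 1, 0 < ∫ t in (x/2)..x, f t * f (x - t) := by
    intro x hx
    apply intervalIntegral.intervalIntegral_pos_of_pos_on
    · apply ContinuousOn.intervalIntegrable
      rw [Set.uIcc_of_le (by linarith [hx.1] : x/2 ≤ x)]
      apply ContinuousOn.mul
      · exact hfc.mono (Set.Icc_subset_Icc (by linarith [hx.1]) (by linarith [hx.2]))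
      · have h2 : ContinuousOn (fun t => f (x - t)) (Set.Icc (x/2) x) := by
          apply ContinuousOn.comp hfc ((continuous_const.sub continuous_id).continuousOn)
          intro t ht
          simp only [Set.mem_Icc, id_eq, Pi.sub_apply]
          exact ⟨by linarith [ht.2], by linarith [ht.1, hx.2]⟩
        exact h2
    · intro t ht
      exact mul_pos (hfpos t ⟨by linarith [ht.1, hx.1], by linarith [ht.2, hx.2]⟩)
        (hfpos _ ⟨by linarith [ht.2], by linarith [ht.1, hx.2]⟩)
    · linarith [hx.1]
  have main : ∀ x ∈ Set.Ioo (0:ℝ) 1,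
      HasDerivAt (deriv M) (-(∫ t in (x/2)..x, f t * f (x - t))) x := by
    intro x hx
    have e2 : (∫ t in (x/2)..x, f t * f (x - t))
        = ∫ t in (x/2)..x, s15tl f t * s15tl f (x - t) := by
      apply intervalIntegral.integral_congr
      intro t ht
      rw [Set.uIcc_of_le (by linarith [hx.1] : x/2 ≤ x)] at ht
      simp only
      rw [s15tl_eq f (by linarith [ht.1, hx.1]) (by linarith [ht.2, hx.2]),
          s15tl_eq f (by linarith [ht.2]) (by linarith [ht.1, hx.2])]
    have hsubR := intervalIntegral.mul_integral_comp_mul_left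
      (a := (1/2:ℝ)) (b := 1) (c := x) (f := fun t => s15tl f t * s15tl f (x - t))
    rw [show x * (1/2:ℝ) = x/2 by ring, mul_one] at hsubR
    -- FTC-in-s identity
    have hw : ∀ s ∈ Set.Ioo (1/2:ℝ) 1, HasDerivAt
        (fun s : ℝ => -((s*s) * (s15tl f (x*s) * s15tl F (x - x*s)))
          - ((1-s)*(1-s)) * ((1 - s15tl F (x*s)) * s15tl f (x - x*s)))
        (2 * s15P f F x s + x * s15Q f F (derivWithin f (Set.Icc 0 1)) x s
          + x * (s15tl f (x*s) * s15tl f (x - x*s))) s := by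
      intro s hs
      have hxs : x*s ∈ Set.Ioo (0:ℝ) 1 :=
        ⟨mul_pos hx.1 (by linarith [hs.1]), by nlinarith [hx.1, hx.2, hs.2]⟩
      have hxs2 : x - x*s ∈ Set.Ioo (0:ℝ) 1 :=
        ⟨by nlinarith [hx.1, hs.2], by nlinarith [hx.1, hx.2, hs.1]⟩
      have hi1 : HasDerivAt (fun s' : ℝ => x * s') x s := by
        simpa using (hasDerivAt_id s).const_mul x
      have hi2 : HasDerivAt (fun s' : ℝ => x - x * s') (-x) s := by
        exact ((hasDerivAt_const s x).sub ((hasDerivAt_id s).const_mul x)).congr_deriv (by simp)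
      have hfa' := HasDerivAt.comp s (s15f_hasDerivAt hf hxs) hi1
      have hfa : HasDerivAt (fun s' => s15tl f (x*s'))
          (s15tl (derivWithin f (Set.Icc 0 1)) (x*s) * x) s := hfa'
      have hFa' := HasDerivAt.comp s (s15F_hasDerivAt hfc hF hxs) hi1
      have hFa : HasDerivAt (fun s' => s15tl F (x*s')) (s15tl f (x*s) * x) s := hFa'
      have hFb' := HasDerivAt.comp s (s15F_hasDerivAt hfc hF hxs2) hi2
      have hFb : HasDerivAt (fun s' => s15tl F (x - x*s')) (s15tl f (x - x*s) * (-x)) s := hFb'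
      have hfb' := HasDerivAt.comp s (s15f_hasDerivAt hf hxs2) hi2
      have hfb : HasDerivAt (fun s' => s15tl f (x - x*s'))
          (s15tl (derivWithin f (Set.Icc 0 1)) (x - x*s) * (-x)) s := hfb'
      have hsq : HasDerivAt (fun s' : ℝ => s'*s') (1*s + s*1) s :=
        (hasDerivAt_id s).mul (hasDerivAt_id s)
      have h1m : HasDerivAt (fun s' : ℝ => (1-s')*(1-s')) (-1*(1-s) + (1-s)*(-1)) s :=
        ((hasDerivAt_id s).const_sub 1).mul ((hasDerivAt_id s).const_sub 1)
      have hraw := ((hsq.mul (hfa.mul hFb)).neg).sub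
        (h1m.mul (((hasDerivAt_const s (1:ℝ)).sub hFa).mul hfb))
      refine hraw.congr_deriv ?_
      simp only [s15P, s15Q, Pi.sub_apply, Pi.mul_apply]
      ring
    have hwcont : Continuous (fun s : ℝ => -((s*s) * (s15tl f (x*s) * s15tl F (x - x*s)))
        - ((1-s)*(1-s)) * ((1 - s15tl F (x*s)) * s15tl f (x - x*s))) := by
      refine Continuous.sub (Continuous.neg ?_) ?_
      · exact (continuous_id.mul continuous_id).mul
          ((hffc.comp (continuous_const.mul continuous_id)).mul
            (hFfc.comp (continuous_const.sub (continuous_const.mul continuous_id))))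
      · exact ((continuous_const.sub continuous_id).mul (continuous_const.sub continuous_id)).mul
          ((continuous_const.sub (hFfc.comp (continuous_const.mul continuous_id))).mul
            (hffc.comp (continuous_const.sub (continuous_const.mul continuous_id))))
    have hScont : Continuous (fun s : ℝ => 2 * s15P f F x s
        + x * s15Q f F (derivWithin f (Set.Icc 0 1)) x s
        + x * (s15tl f (x*s) * s15tl f (x - x*s))) := by
      refine Continuous.add (Continuous.add ?_ ?_) ?_
      · exact continuous_const.mul (s15P_cont hffc hFfc x)
      · exact continuous_const.mul (s15Q_cont hffc hFfc hgfc x)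
      · exact continuous_const.mul ((hffc.comp (continuous_const.mul continuous_id)).mul
          (hffc.comp (continuous_const.sub (continuous_const.mul continuous_id))))
    have hftc := intervalIntegral.integral_eq_sub_of_hasDeriv_right_of_le
      (by norm_num : (1/2:ℝ) ≤ 1) hwcont.continuousOn
      (fun s hs => (hw s hs).hasDerivWithinAt) (hScont.intervalIntegrable _ _)
    have hiP : IntervalIntegrable (fun s => 2 * s15P f F x s) MeasureTheory.volume (1/2) 1 :=
      (continuous_const.mul (s15P_cont hffc hFfc x)).intervalIntegrable _ _
    have hiQ : IntervalIntegrable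
        (fun s => x * s15Q f F (derivWithin f (Set.Icc 0 1)) x s)
        MeasureTheory.volume (1/2) 1 :=
      (continuous_const.mul (s15Q_cont hffc hFfc hgfc x)).intervalIntegrable _ _
    have hiR : IntervalIntegrable (fun s => x * (s15tl f (x*s) * s15tl f (x - x*s)))
        MeasureTheory.volume (1/2) 1 :=
      (continuous_const.mul ((hffc.comp (continuous_const.mul continuous_id)).mul
        (hffc.comp (continuous_const.sub (continuous_const.mul continuous_id))))).intervalIntegrable _ _
    have hsplit : (∫ s in (1/2:ℝ)..1, (2 * s15P f F x s
          + x * s15Q f F (derivWithin f (Set.Icc 0 1)) x s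
          + x * (s15tl f (x*s) * s15tl f (x - x*s))))
        = 2 * s15N1 f F x + x * s15N2 f F (derivWithin f (Set.Icc 0 1)) x
          + x * (∫ s in (1/2:ℝ)..1, s15tl f (x*s) * s15tl f (x - x*s)) := by
      rw [intervalIntegral.integral_add (hiP.add hiQ) hiR,
          intervalIntegral.integral_add hiP hiQ,
          intervalIntegral.integral_const_mul, intervalIntegral.integral_const_mul,
          intervalIntegral.integral_const_mul]
      simp only [s15N1, s15N2]
    have hkey : 2 * s15N1 f F x + x * s15N2 f F (derivWithin f (Set.Icc 0 1)) x
        + x * (∫ s in (1/2:ℝ)..1, s15tl f (x*s) * s15tl f (x - x*s))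
        = s15tl f (x/2) * (1/4) := by
      rw [hsplit] at hftc
      rw [hftc]
      rw [show x - x*(1:ℝ) = 0 by ring, hFf0,
          show x * (1/2:ℝ) = x/2 by ring, show x - x/2 = x/2 by ring]
      ring
    have hx2 : x/2 ∈ Set.Ioo (0:ℝ) 1 := ⟨by linarith [hx.1], by linarith [hx.1, hx.2]⟩
    have hT1' := HasDerivAt.comp x (s15F_hasDerivAt hfc hF hx2) ((hasDerivAt_id x).div_const 2)
    have hT1a : HasDerivAt (fun y : ℝ => s15tl F (y/2)) (s15tl f (x/2) * (1/2)) x := hT1'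
    have hT1 : HasDerivAt (fun y : ℝ => (1 - s15tl F (y/2)) * (1/2))
        (-(s15tl f (x/2) * (1/2)) * (1/2)) x := (hT1a.const_sub 1).mul_const (1/2)
    have hT2 : HasDerivAt (fun y => 1 * s15N F y + y * s15N1 f F y)
        (1 * s15N1 f F x + (1 * s15N1 f F x
          + x * s15N2 f F (derivWithin f (Set.Icc 0 1)) x)) x :=
      (HasDerivAt.const_mul 1 (hNd hx)).add ((hasDerivAt_id x).mul (hN1d hx))
    have hM1d : HasDerivAt
        (fun y => (1 - s15tl F (y/2)) * (1/2) + (1 * s15N F y + y * s15N1 f F y))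
        (-(∫ t in (x/2)..x, f t * f (x - t))) x := by
      have hcomb := hT1.add hT2
      refine hcomb.congr_deriv ?_
      rw [e2, ← hsubR]
      linarith [hkey]
    refine HasDerivAt.congr_of_eventuallyEq hM1d ?_
    filter_upwards [isOpen_Ioo.mem_nhds hx] with y hy
    exact hderivMeq y hy
  refine ⟨fun x hx => ⟨main x hx, by linarith [hneg x hx]⟩, ?_⟩
  apply strictConcaveOn_of_deriv2_neg (convex_Icc 0 1) hMcontIcc
  intro y hy
  rw [interior_Icc] at hy
  have h2 := (main y hy).deriv
  have hit : deriv^[2] M y = deriv (deriv M) y := rfl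
  rw [hit, h2]
  linarith [hneg y hy]
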